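/- Let (N,v) be a TU game with veto player a, empty core, and least core value ε* = ε̂ := min{ (v(N)−v(S))/(|N|−|S|+1) : S proper, a ∈ S }. Then the argmin set of this minimization contains exactly one coalition. -/
import Mathlib


open Finset
open scoped Classical

/-- The strong ε-core of a TU game. -/
def epsCore {ι : Type*} [Fintype ι] [DecidableEq ι] (v : Finset ι → ℝ) (ε : ℝ) :
    Set (ι → ℝ) :=
  {x | (∑ i, x i) = v Finset.univ ∧
    ∀ S : Finset ι, S.Nonempty → S ≠ Finset.univ → v S + ε ≤ ∑ i ∈ S, x i}

/-- The least core value: the largest ε for which the strong ε-core is nonempty. -/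
noncomputable def lcv {ι : Type*} [Fintype ι] [DecidableEq ι] (v : Finset ι → ℝ) : ℝ :=
  sSup {ε : ℝ | (epsCore v ε).Nonempty}

/-- The set of proper coalitions containing the player `a`. -/
def Pa {ι : Type*} [Fintype ι] [DecidableEq ι] (a : ι) : Finset (Finset ι) :=
  Finset.univ.filter (fun S => a ∈ S ∧ S ≠ Finset.univ)

/-- The quantity `(v(N) − v(S))/(|N| − |S| + 1)`. -/
noncomputable def excessRatio {ι : Type*} [Fintype ι] [DecidableEq ι]
    (v : Finset ι → ℝ) (S : Finset ι) : ℝ :=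
  (v Finset.univ - v S) / ((Fintype.card ι : ℝ) - (S.card : ℝ) + 1)

lemma bound_aux {ι : Type*} [Fintype ι] [DecidableEq ι]
    (v : Finset ι → ℝ) (a : ι) (hcard : 3 ≤ Fintype.card ι)
    (hveto : ∀ S : Finset ι, a ∉ S → v S = 0)
    (S : Finset ι) (hSa : a ∈ S) (hSu : S ≠ Finset.univ)
    (εh ε : ℝ) (x : ι → ℝ) (hx : x ∈ epsCore v ε)
    (hmin : v Finset.univ - v S = ((Fintype.card ι : ℝ) - S.card + 1) * εh)
    (j : ι) (hj : j ∉ S) :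
    x j ≤ ((Fintype.card ι : ℝ) - S.card + 1) * εh
      - ((Fintype.card ι : ℝ) - S.card) * ε := by
  obtain ⟨hsum, hcons⟩ := hx
  have hSx : v S + ε ≤ ∑ i ∈ S, x i := hcons S ⟨a, hSa⟩ hSu
  have hsingle : ∀ i ∈ Sᶜ, ε ≤ x i := by
    intro i hi
    have hiS : i ∉ S := Finset.mem_compl.mp hi
    have hia : i ≠ a := fun h => hiS (h ▸ hSa)
    have hne : ({i} : Finset ι) ≠ Finset.univ := by
      intro h
      have : Fintype.card ι = 1 := by
        rw [← Finset.card_univ, ← h, Finset.card_singleton]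
      omega
    have h1 := hcons {i} (Finset.singleton_nonempty i) hne
    have hv : v {i} = 0 := hveto {i} (by simp [hia.symm])
    simpa [hv] using h1
  have hjc : j ∈ Sᶜ := Finset.mem_compl.mpr hj
  have hsplit : (∑ i ∈ S, x i) + (∑ i ∈ Sᶜ, x i) = v Finset.univ := by
    rw [Finset.sum_add_sum_compl]; exact hsum
  have herase : x j + ∑ i ∈ Sᶜ.erase j, x i = ∑ i ∈ Sᶜ, x i :=
    Finset.add_sum_erase _ _ hjc
  have hlow : ((Sᶜ.erase j).card : ℝ) * ε ≤ ∑ i ∈ Sᶜ.erase j, x i := by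
    have := Finset.card_nsmul_le_sum (Sᶜ.erase j) x ε
      (fun i hi => hsingle i (Finset.mem_of_mem_erase hi))
    simpa [nsmul_eq_mul] using this
  have hcS : S.card < Fintype.card ι := (Finset.card_lt_iff_ne_univ S).mpr hSu
  have hcompl : (Sᶜ.card : ℝ) = (Fintype.card ι : ℝ) - S.card := by
    rw [Finset.card_compl, Nat.cast_sub (le_of_lt hcS)]
  have hcerase : ((Sᶜ.erase j).card : ℝ) = (Fintype.card ι : ℝ) - S.card - 1 := by
    rw [Finset.card_erase_of_mem hjc, Nat.cast_sub (Finset.card_pos.mpr ⟨j, hjc⟩),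
      Nat.cast_one, hcompl]
  rw [hcerase] at hlow
  linarith

/-- For a veto game with empty core whose least core value equals
`ε̂ = min{(v(N)−v(S))/(|N|−|S|+1) : S proper, a ∈ S}`, the argmin set of this
minimization contains exactly one coalition. -/
theorem stmt13 {ι : Type*} [Fintype ι] [DecidableEq ι] (v : Finset ι → ℝ) (a : ι)
    (hcard : 3 ≤ Fintype.card ι)
    (hempty : v ∅ = 0)
    (hveto : ∀ S : Finset ι, a ∉ S → v S = 0)
    (hcore : ¬ (epsCore v 0).Nonempty)
    (hPa : (Pa a).Nonempty)
    (hstar : lcv v = (Pa a).inf' hPa (excessRatio v)) :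
    ((Pa a).filter
      (fun S => excessRatio v S = (Pa a).inf' hPa (excessRatio v))).card = 1 := by
  classical
  set εh := (Pa a).inf' hPa (excessRatio v) with hεh
  have hPamem : ∀ S : Finset ι, S ∈ Pa a ↔ a ∈ S ∧ S ≠ Finset.univ := by
    intro S; simp [Pa]
  have hden : ∀ S : Finset ι, S ≠ Finset.univ →
      (0:ℝ) < (Fintype.card ι : ℝ) - S.card + 1 := by
    intro S hS
    have : S.card < Fintype.card ι := (Finset.card_lt_iff_ne_univ S).mpr hS
    have : (S.card : ℝ) < (Fintype.card ι : ℝ) := by exact_mod_cast this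
    linarith
  -- ε̂ < 0
  have hneg : εh < 0 := by
    by_contra h
    push_neg at h
    apply hcore
    refine ⟨fun i => if i = a then v Finset.univ else 0, ?_, ?_⟩
    · simp
    · intro S hSne hSu
      by_cases ha : a ∈ S
      · have hmem : S ∈ Pa a := (hPamem S).mpr ⟨ha, hSu⟩
        have hr : εh ≤ excessRatio v S := Finset.inf'_le _ hmem
        have hr0 : 0 ≤ excessRatio v S := le_trans h hr
        have hd := hden S hSu
        have hnum : 0 ≤ v Finset.univ - v S := by
          have := (div_nonneg_iff.mp hr0)
          rcases this with ⟨h1, _⟩ | ⟨_, h2⟩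
          · exact h1
          · linarith
        have hxS : (∑ i ∈ S, (if i = a then v Finset.univ else 0)) = v Finset.univ := by
          rw [Finset.sum_ite_eq' S a (fun _ => v Finset.univ)]
          simp [ha]
        rw [hxS]; linarith
      · have hv : v S = 0 := hveto S ha
        have hxS : (∑ i ∈ S, (if i = a then v Finset.univ else 0)) = 0 := by
          rw [Finset.sum_ite_eq' S a (fun _ => v Finset.univ)]
          simp [ha]
        rw [hxS, hv]; linarith
  -- the feasible set is nonempty
  have hE : {ε : ℝ | (epsCore v ε).Nonempty}.Nonempty := by
    by_contra h
    rw [Set.not_nonempty_iff_eq_empty] at h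
    rw [lcv, h, Real.sSup_empty] at hstar
    linarith
  -- key contradiction from two minimizers
  have key : ∀ S T : Finset ι, S ∈ Pa a → T ∈ Pa a →
      excessRatio v S = εh → excessRatio v T = εh →
      ∀ j k : ι, j ∉ S → k ∉ T → j ≠ k → False := by
    intro S T hS hT hmS hmT j k hjS hkT hjk
    obtain ⟨hSa, hSu⟩ := (hPamem S).mp hS
    obtain ⟨hTa, hTu⟩ := (hPamem T).mp hT
    have hja : j ≠ a := fun h => hjS (h ▸ hSa)
    have hka : k ≠ a := fun h => hkT (h ▸ hTa)
    set A : ℝ := (Fintype.card ι : ℝ) - S.card with hA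
    set B : ℝ := (Fintype.card ι : ℝ) - T.card with hB
    have hA1 : (1:ℝ) ≤ A := by
      have : S.card < Fintype.card ι := (Finset.card_lt_iff_ne_univ S).mpr hSu
      have : (S.card : ℝ) + 1 ≤ (Fintype.card ι : ℝ) := by exact_mod_cast this
      simp only [hA]; linarith
    have hB1 : (1:ℝ) ≤ B := by
      have : T.card < Fintype.card ι := (Finset.card_lt_iff_ne_univ T).mpr hTu
      have : (T.card : ℝ) + 1 ≤ (Fintype.card ι : ℝ) := by exact_mod_cast this
      simp only [hB]; linarith
    have hmS' : v Finset.univ - v S = (A + 1) * εh := by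
      have hd := hden S hSu
      rw [excessRatio] at hmS
      field_simp at hmS
      simp only [hA]; linarith
    have hmT' : v Finset.univ - v T = (B + 1) * εh := by
      have hd := hden T hTu
      rw [excessRatio] at hmT
      field_simp at hmT
      simp only [hB]; linarith
    have hdpos : (0:ℝ) < 1 + A + B := by linarith
    have hub : ∀ ε ∈ {ε : ℝ | (epsCore v ε).Nonempty},
        ε ≤ ((A + B + 2) * εh) / (1 + A + B) := by
      intro ε hε
      obtain ⟨x, hx⟩ := hε
      have hbj : x j ≤ (A + 1) * εh - A * ε := by
        have := bound_aux v a hcard hveto S hSa hSu εh ε x hx hmS' j hjS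
        simpa [hA] using this
      have hbk : x k ≤ (B + 1) * εh - B * ε := by
        have := bound_aux v a hcard hveto T hTa hTu εh ε x hx hmT' k hkT
        simpa [hB] using this
      have hpairne : ({j, k} : Finset ι) ≠ Finset.univ := by
        intro h
        have hc : ({j, k} : Finset ι).card = 2 := Finset.card_pair hjk
        rw [h, Finset.card_univ] at hc
        omega
      have hvp : v {j, k} = 0 := by
        apply hveto
        simp [hja.symm, hka.symm]
      have hpair := hx.2 {j, k} ⟨j, by simp⟩ hpairne
      rw [hvp, Finset.sum_pair hjk] at hpair
      rw [le_div_iff₀ hdpos]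
      nlinarith [hpair, hbj, hbk]
    have hle : εh ≤ ((A + B + 2) * εh) / (1 + A + B) := by
      have := csSup_le hE hub
      rw [← lcv, hstar] at this
      exact this
    rw [le_div_iff₀ hdpos] at hle
    nlinarith
  -- extract a minimizer and show uniqueness
  obtain ⟨S₀, hS₀mem, hS₀⟩ := Finset.exists_mem_eq_inf' hPa (excessRatio v)
  have hS₀min : excessRatio v S₀ = εh := by rw [hεh, hS₀]
  obtain ⟨hS₀a, hS₀u⟩ := (hPamem S₀).mp hS₀mem
  have huniq : ∀ T ∈ Pa a, excessRatio v T = εh → T = S₀ := by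
    intro T hT hTm
    by_contra hne
    obtain ⟨hTa, hTu⟩ := (hPamem T).mp hT
    have hcne : Tᶜ ≠ S₀ᶜ := fun h => hne (by
      have := congrArg (·ᶜ) h
      simpa using this)
    have hcases : (¬ Tᶜ ⊆ S₀ᶜ) ∨ (¬ S₀ᶜ ⊆ Tᶜ) := by
      by_contra h
      push_neg at h
      exact hcne (Finset.Subset.antisymm h.1 h.2)
    rcases hcases with h | h
    · obtain ⟨j, hj1, hj2⟩ := Finset.not_subset.mp h
      have hjT : j ∉ T := Finset.mem_compl.mp hj1
      have hjS : j ∈ S₀ := by simpa using hj2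
      obtain ⟨k, hk⟩ : S₀ᶜ.Nonempty := by
        rw [Finset.nonempty_iff_ne_empty]
        intro hh
        exact hS₀u (by simpa [Finset.compl_eq_empty_iff] using hh)
      have hkS : k ∉ S₀ := Finset.mem_compl.mp hk
      have hjk : j ≠ k := fun h => hkS (h ▸ hjS)
      exact key T S₀ hT hS₀mem hTm hS₀min j k hjT hkS hjk
    · obtain ⟨j, hj1, hj2⟩ := Finset.not_subset.mp h
      have hjS : j ∉ S₀ := Finset.mem_compl.mp hj1
      have hjT : j ∈ T := by simpa using hj2
      obtain ⟨k, hk⟩ : Tᶜ.Nonempty := by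
        rw [Finset.nonempty_iff_ne_empty]
        intro hh
        exact hTu (by simpa [Finset.compl_eq_empty_iff] using hh)
      have hkT : k ∉ T := Finset.mem_compl.mp hk
      have hjk : j ≠ k := fun h => hkT (h ▸ hjT)
      exact key S₀ T hS₀mem hT hS₀min hTm j k hjS hkT hjk
  have hfilter : (Pa a).filter (fun S => excessRatio v S = εh) = {S₀} := by
    ext T
    simp only [Finset.mem_filter, Finset.mem_singleton]
    constructor
    · rintro ⟨hT, hm⟩
      exact huniq T hT hm
    · rintro rfl
      exact ⟨hS₀mem, hS₀min⟩
  rw [hfilter, Finset.card_singleton]
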